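/- Let k have characteristic 3. The quotient Z(A)/Z^pr(A) of the center of A by the span of αβ − βα is isomorphic as a k-algebra to k[x,y]/(x³ − y², xy, y³), via the map sending x to the image of γ and y to the image of δ. -/

import Mathlib

/-! The 9-dimensional algebra `A` given by the quiver with vertices `i, j`, arrows
`α : i → j`, `β : j → i`, and loops `γ, δ` at `i`, with relations
`δ² = γ³ = αβ`, `δγ = γδ = 0`, `δα = γα = 0`, `βδ = βγ = 0`.
Paths compose left-to-right, so the product `x * y` means "first `x`, then `y`";
in particular `α * β` is a loop at `i` and `β * α` is a loop at `j`.
We realise `A` as the quotient of the free algebra on the six generators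
`e_i, e_j, α, β, γ, δ` by the path-algebra relations together with the quiver relations. -/

open FreeAlgebra

/-- The defining relations of the quiver algebra: generator `0` is the vertex idempotent
`e_i`, `1` is `e_j`, `2` is `α : i → j`, `3` is `β : j → i`, `4` is the loop `γ` at `i`,
and `5` is the loop `δ` at `i`. -/
inductive QuiverRel (k : Type*) [Field k] :
    FreeAlgebra k (Fin 6) → FreeAlgebra k (Fin 6) → Prop
  | idem_i : QuiverRel k (ι k 0 * ι k 0) (ι k 0)
  | idem_j : QuiverRel k (ι k 1 * ι k 1) (ι k 1)
  | orth_ij : QuiverRel k (ι k 0 * ι k 1) 0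
  | orth_ji : QuiverRel k (ι k 1 * ι k 0) 0
  | sum_idem : QuiverRel k (ι k 0 + ι k 1) 1
  | alpha_src : QuiverRel k (ι k 0 * ι k 2) (ι k 2)   -- α starts at i
  | alpha_tgt : QuiverRel k (ι k 2 * ι k 1) (ι k 2)   -- α ends at j
  | beta_src : QuiverRel k (ι k 1 * ι k 3) (ι k 3)    -- β starts at j
  | beta_tgt : QuiverRel k (ι k 3 * ι k 0) (ι k 3)    -- β ends at i
  | gamma_src : QuiverRel k (ι k 0 * ι k 4) (ι k 4)
  | gamma_tgt : QuiverRel k (ι k 4 * ι k 0) (ι k 4)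
  | delta_src : QuiverRel k (ι k 0 * ι k 5) (ι k 5)
  | delta_tgt : QuiverRel k (ι k 5 * ι k 0) (ι k 5)
  | delta_sq : QuiverRel k (ι k 5 * ι k 5) (ι k 2 * ι k 3)        -- δ² = αβ
  | gamma_cube : QuiverRel k (ι k 4 * (ι k 4 * ι k 4)) (ι k 2 * ι k 3)  -- γ³ = αβ
  | delta_gamma : QuiverRel k (ι k 5 * ι k 4) 0
  | gamma_delta : QuiverRel k (ι k 4 * ι k 5) 0
  | delta_alpha : QuiverRel k (ι k 5 * ι k 2) 0
  | gamma_alpha : QuiverRel k (ι k 4 * ι k 2) 0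
  | beta_delta : QuiverRel k (ι k 3 * ι k 5) 0
  | beta_gamma : QuiverRel k (ι k 3 * ι k 4) 0

variable (k : Type*) [Field k]

/-- The 9-dimensional quiver algebra `A`. -/
abbrev QuiverAlg := RingQuot (QuiverRel k)

/-- The vertex idempotent `i`. -/
noncomputable def qi : QuiverAlg k := RingQuot.mkAlgHom k (QuiverRel k) (ι k 0)
/-- The vertex idempotent `j`. -/
noncomputable def qj : QuiverAlg k := RingQuot.mkAlgHom k (QuiverRel k) (ι k 1)
/-- The arrow `α : i → j`. -/
noncomputable def qα : QuiverAlg k := RingQuot.mkAlgHom k (QuiverRel k) (ι k 2)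
/-- The arrow `β : j → i`. -/
noncomputable def qβ : QuiverAlg k := RingQuot.mkAlgHom k (QuiverRel k) (ι k 3)
/-- The loop `γ` at `i`. -/
noncomputable def qγ : QuiverAlg k := RingQuot.mkAlgHom k (QuiverRel k) (ι k 4)
/-- The loop `δ` at `i`. -/
noncomputable def qδ : QuiverAlg k := RingQuot.mkAlgHom k (QuiverRel k) (ι k 5)

/-- The standard basis vector `{i, j, α, β, βα, γ, γ², δ, δ²}` of `A`. -/
noncomputable def qbasisVec : Fin 9 → QuiverAlg k :=
  ![qi k, qj k, qα k, qβ k, qβ k * qα k, qγ k, qγ k ^ 2, qδ k, qδ k ^ 2]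

/-- The centre `Z(A)` of the quiver algebra. -/
noncomputable abbrev QCenter := Subalgebra.center k (QuiverAlg k)

section Stmt11Aux

open Matrix

abbrev M9 := Matrix (Fin 9) (Fin 9) ℤ

def MxI : M9 := Matrix.diagonal ![1,0,1,0,0,1,1,1,1]
def MxJ : M9 := Matrix.diagonal ![0,1,0,1,1,0,0,0,0]
def MxA : M9 := single 2 1 1 + single 8 3 1
def MxB : M9 := single 3 0 1 + single 4 2 1
def MxG : M9 := single 5 0 1 + single 6 5 1 + single 8 6 1
def MxD : M9 := single 7 0 1 + single 8 7 1
def MxBA : M9 := single 4 1 1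
def MxG2 : M9 := single 6 0 1 + single 8 5 1
def MxD2 : M9 := single 8 0 1

def Msgen : Fin 6 → M9 := ![MxI, MxJ, MxA, MxB, MxG, MxD]
def MsB : Fin 9 → M9 := ![MxI, MxJ, MxA, MxB, MxBA, MxG, MxG2, MxD, MxD2]

def castM : M9 →+* Matrix (Fin 9) (Fin 9) k := (Int.castRingHom k).mapMatrix

lemma centry (M : M9) (p q : Fin 9) : castM k M p q = ((M p q : ℤ) : k) := rfl

lemma castM_mul_eq {X Y Z : M9} (h : X * Y = Z) :
    castM k X * castM k Y = castM k Z := by rw [← _root_.map_mul, h]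
lemma castM_mul_eq2 {X Y W V : M9} (h : X * Y = W * V) :
    castM k X * castM k Y = castM k W * castM k V := by
  rw [← _root_.map_mul, ← _root_.map_mul, h]
lemma castM_mul_zero {X Y : M9} (h : X * Y = 0) :
    castM k X * castM k Y = 0 := by rw [← _root_.map_mul, h, _root_.map_zero]
lemma castM_mul_mul {X Y Z W V : M9} (h : X * (Y * Z) = W * V) :
    castM k X * (castM k Y * castM k Z) = castM k W * castM k V := by
  rw [← _root_.map_mul, ← _root_.map_mul, ← _root_.map_mul, h, _root_.map_mul]
lemma castM_add_one {X Y : M9} (h : X + Y = 1) :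
    castM k X + castM k Y = 1 := by rw [← _root_.map_add, h, _root_.map_one]

set_option maxHeartbeats 1600000 in
lemma z1 : MxI * MxI = MxI := by decide
set_option maxHeartbeats 1600000 in
lemma z2 : MxJ * MxJ = MxJ := by decide
set_option maxHeartbeats 1600000 in
lemma z3 : MxI * MxJ = 0 := by decide
set_option maxHeartbeats 1600000 in
lemma z4 : MxJ * MxI = 0 := by decide
set_option maxHeartbeats 1600000 in
lemma z5 : MxI + MxJ = 1 := by decide
set_option maxHeartbeats 1600000 in
lemma z6 : MxI * MxA = MxA := by decide
set_option maxHeartbeats 1600000 in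
lemma z7 : MxA * MxJ = MxA := by decide
set_option maxHeartbeats 1600000 in
lemma z8 : MxJ * MxB = MxB := by decide
set_option maxHeartbeats 1600000 in
lemma z9 : MxB * MxI = MxB := by decide
set_option maxHeartbeats 1600000 in
lemma z10 : MxI * MxG = MxG := by decide
set_option maxHeartbeats 1600000 in
lemma z11 : MxG * MxI = MxG := by decide
set_option maxHeartbeats 1600000 in
lemma z12 : MxI * MxD = MxD := by decide
set_option maxHeartbeats 1600000 in
lemma z13 : MxD * MxI = MxD := by decide
set_option maxHeartbeats 1600000 in
lemma z14 : MxD * MxD = MxA * MxB := by decide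
set_option maxHeartbeats 1600000 in
lemma z15 : MxG * (MxG * MxG) = MxA * MxB := by decide
set_option maxHeartbeats 1600000 in
lemma z16 : MxD * MxG = 0 := by decide
set_option maxHeartbeats 1600000 in
lemma z17 : MxG * MxD = 0 := by decide
set_option maxHeartbeats 1600000 in
lemma z18 : MxD * MxA = 0 := by decide
set_option maxHeartbeats 1600000 in
lemma z19 : MxG * MxA = 0 := by decide
set_option maxHeartbeats 1600000 in
lemma z20 : MxB * MxD = 0 := by decide
set_option maxHeartbeats 1600000 in
lemma z21 : MxB * MxG = 0 := by decide
set_option maxHeartbeats 1600000 in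
lemma z22 : MxB * MxA = MxBA := by decide
set_option maxHeartbeats 1600000 in
lemma z23 : MxG * MxG = MxG2 := by decide
set_option maxHeartbeats 1600000 in
lemma z24 : MxD * MxD = MxD2 := by decide
lemma Msgen_0 : Msgen 0 = MxI := rfl
lemma Msgen_1 : Msgen 1 = MxJ := rfl
lemma Msgen_2 : Msgen 2 = MxA := rfl
lemma Msgen_3 : Msgen 3 = MxB := rfl
lemma Msgen_4 : Msgen 4 = MxG := rfl
lemma Msgen_5 : Msgen 5 = MxD := rfl
lemma MsB_0 : MsB 0 = MxI := rfl
lemma MsB_1 : MsB 1 = MxJ := rfl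
lemma MsB_2 : MsB 2 = MxA := rfl
lemma MsB_3 : MsB 3 = MxB := rfl
lemma MsB_4 : MsB 4 = MxBA := rfl
lemma MsB_5 : MsB 5 = MxG := rfl
lemma MsB_6 : MsB 6 = MxG2 := rfl
lemma MsB_7 : MsB 7 = MxD := rfl
lemma MsB_8 : MsB 8 = MxD2 := rfl

lemma hrelΦ : ∀ ⦃x y : FreeAlgebra k (Fin 6)⦄, QuiverRel k x y →
    (FreeAlgebra.lift k fun n => castM k (Msgen n)) x
      = (FreeAlgebra.lift k fun n => castM k (Msgen n)) y := by
  intro x y h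
  cases h <;>
    simp only [_root_.map_mul, _root_.map_add, _root_.map_one, _root_.map_zero,
      FreeAlgebra.lift_ι_apply, Msgen_0, Msgen_1, Msgen_2, Msgen_3, Msgen_4, Msgen_5]
  case idem_i => exact castM_mul_eq k z1
  case idem_j => exact castM_mul_eq k z2
  case orth_ij => exact castM_mul_zero k z3
  case orth_ji => exact castM_mul_zero k z4
  case sum_idem => exact castM_add_one k z5
  case alpha_src => exact castM_mul_eq k z6
  case alpha_tgt => exact castM_mul_eq k z7
  case beta_src => exact castM_mul_eq k z8
  case beta_tgt => exact castM_mul_eq k z9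
  case gamma_src => exact castM_mul_eq k z10
  case gamma_tgt => exact castM_mul_eq k z11
  case delta_src => exact castM_mul_eq k z12
  case delta_tgt => exact castM_mul_eq k z13
  case delta_sq => exact castM_mul_eq2 k z14
  case gamma_cube => exact castM_mul_mul k z15
  case delta_gamma => exact castM_mul_zero k z16
  case gamma_delta => exact castM_mul_zero k z17
  case delta_alpha => exact castM_mul_zero k z18
  case gamma_alpha => exact castM_mul_zero k z19
  case beta_delta => exact castM_mul_zero k z20
  case beta_gamma => exact castM_mul_zero k z21

noncomputable def Φq : QuiverAlg k →ₐ[k] Matrix (Fin 9) (Fin 9) k :=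
  RingQuot.liftAlgHom k ⟨FreeAlgebra.lift k fun n => castM k (Msgen n), hrelΦ k⟩

lemma Φq_mk (x : FreeAlgebra k (Fin 6)) :
    Φq k (RingQuot.mkAlgHom k (QuiverRel k) x)
      = FreeAlgebra.lift k (fun n => castM k (Msgen n)) x :=
  RingQuot.liftAlgHom_mkAlgHom_apply k _ _ x

lemma Φq_i : Φq k (qi k) = castM k MxI := by rw [qi, Φq_mk, FreeAlgebra.lift_ι_apply]; rfl
lemma Φq_j : Φq k (qj k) = castM k MxJ := by rw [qj, Φq_mk, FreeAlgebra.lift_ι_apply]; rfl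
lemma Φq_a : Φq k (qα k) = castM k MxA := by rw [qα, Φq_mk, FreeAlgebra.lift_ι_apply]; rfl
lemma Φq_b : Φq k (qβ k) = castM k MxB := by rw [qβ, Φq_mk, FreeAlgebra.lift_ι_apply]; rfl
lemma Φq_g : Φq k (qγ k) = castM k MxG := by rw [qγ, Φq_mk, FreeAlgebra.lift_ι_apply]; rfl
lemma Φq_d : Φq k (qδ k) = castM k MxD := by rw [qδ, Φq_mk, FreeAlgebra.lift_ι_apply]; rfl

lemma Φq_basis (m : Fin 9) : Φq k (qbasisVec k m) = castM k (MsB m) := by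
  fin_cases m
  · exact Φq_i k
  · exact Φq_j k
  · exact Φq_a k
  · exact Φq_b k
  · show Φq k (qβ k * qα k) = castM k MxBA
    rw [_root_.map_mul, Φq_b, Φq_a]
    exact castM_mul_eq k z22
  · exact Φq_g k
  · show Φq k (qγ k ^ 2) = castM k MxG2
    rw [pow_two, _root_.map_mul, Φq_g]
    exact castM_mul_eq k z23
  · exact Φq_d k
  · show Φq k (qδ k ^ 2) = castM k MxD2
    rw [pow_two, _root_.map_mul, Φq_d]
    exact castM_mul_eq k z24

-- Product relations in the quiver algebra
lemma qrel {x y : FreeAlgebra k (Fin 6)} (h : QuiverRel k x y) :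
    RingQuot.mkAlgHom k (QuiverRel k) x = RingQuot.mkAlgHom k (QuiverRel k) y :=
  RingQuot.mkAlgHom_rel k h

lemma rii : qi k * qi k = qi k := by
  rw [qi, ← _root_.map_mul]; exact qrel k .idem_i
lemma rjj : qj k * qj k = qj k := by
  rw [qj, ← _root_.map_mul]; exact qrel k .idem_j
lemma rij : qi k * qj k = 0 := by
  rw [qi, qj, ← _root_.map_mul]; rw [qrel k .orth_ij, _root_.map_zero]
lemma rji : qj k * qi k = 0 := by
  rw [qi, qj, ← _root_.map_mul]; rw [qrel k .orth_ji, _root_.map_zero]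
lemma rone : qi k + qj k = 1 := by
  rw [qi, qj, ← _root_.map_add]; rw [qrel k .sum_idem, _root_.map_one]
lemma ria : qi k * qα k = qα k := by
  rw [qi, qα, ← _root_.map_mul]; exact qrel k .alpha_src
lemma raj : qα k * qj k = qα k := by
  rw [qj, qα, ← _root_.map_mul]; exact qrel k .alpha_tgt
lemma rjb : qj k * qβ k = qβ k := by
  rw [qj, qβ, ← _root_.map_mul]; exact qrel k .beta_src
lemma rbi : qβ k * qi k = qβ k := by
  rw [qi, qβ, ← _root_.map_mul]; exact qrel k .beta_tgt
lemma rig : qi k * qγ k = qγ k := by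
  rw [qi, qγ, ← _root_.map_mul]; exact qrel k .gamma_src
lemma rgi : qγ k * qi k = qγ k := by
  rw [qi, qγ, ← _root_.map_mul]; exact qrel k .gamma_tgt
lemma rid : qi k * qδ k = qδ k := by
  rw [qi, qδ, ← _root_.map_mul]; exact qrel k .delta_src
lemma rdi : qδ k * qi k = qδ k := by
  rw [qi, qδ, ← _root_.map_mul]; exact qrel k .delta_tgt
lemma rab : qα k * qβ k = qδ k * qδ k := by
  rw [qα, qβ, qδ, ← _root_.map_mul, ← _root_.map_mul]
  exact (qrel k .delta_sq).symm
lemma rggg : qγ k * (qγ k * qγ k) = qδ k * qδ k := by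
  rw [qγ, qδ, ← _root_.map_mul, ← _root_.map_mul, ← _root_.map_mul]
  rw [qrel k .gamma_cube, ← qrel k .delta_sq]
lemma rdg : qδ k * qγ k = 0 := by
  rw [qγ, qδ, ← _root_.map_mul]; rw [qrel k .delta_gamma, _root_.map_zero]
lemma rgd : qγ k * qδ k = 0 := by
  rw [qγ, qδ, ← _root_.map_mul]; rw [qrel k .gamma_delta, _root_.map_zero]
lemma rda : qδ k * qα k = 0 := by
  rw [qα, qδ, ← _root_.map_mul]; rw [qrel k .delta_alpha, _root_.map_zero]
lemma rga : qγ k * qα k = 0 := by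
  rw [qα, qγ, ← _root_.map_mul]; rw [qrel k .gamma_alpha, _root_.map_zero]
lemma rbd : qβ k * qδ k = 0 := by
  rw [qβ, qδ, ← _root_.map_mul]; rw [qrel k .beta_delta, _root_.map_zero]
lemma rbg : qβ k * qγ k = 0 := by
  rw [qβ, qγ, ← _root_.map_mul]; rw [qrel k .beta_gamma, _root_.map_zero]

-- derived atomic products
lemma rai : qα k * qi k = 0 := by rw [← raj, mul_assoc, rji, mul_zero]
lemma rja : qj k * qα k = 0 := by rw [← ria, ← mul_assoc, rji, zero_mul]
lemma rbj : qβ k * qj k = 0 := by rw [← rbi, mul_assoc, rij, mul_zero]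
lemma rib : qi k * qβ k = 0 := by rw [← rjb, ← mul_assoc, rij, zero_mul]
lemma rgj : qγ k * qj k = 0 := by rw [← rgi, mul_assoc, rij, mul_zero]
lemma rjg : qj k * qγ k = 0 := by rw [← rig, ← mul_assoc, rji, zero_mul]
lemma rdj : qδ k * qj k = 0 := by rw [← rdi, mul_assoc, rij, mul_zero]
lemma rjd : qj k * qδ k = 0 := by rw [← rid, ← mul_assoc, rji, zero_mul]
lemma raa : qα k * qα k = 0 := by
  nth_rewrite 2 [← ria]; rw [← mul_assoc, rai, zero_mul]
lemma rag : qα k * qγ k = 0 := by rw [← rig, ← mul_assoc, rai, zero_mul]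
lemma rad : qα k * qδ k = 0 := by rw [← rid, ← mul_assoc, rai, zero_mul]
lemma rbb : qβ k * qβ k = 0 := by
  nth_rewrite 2 [← rjb]; rw [← mul_assoc, rbj, zero_mul]
lemma rgb : qγ k * qβ k = 0 := by rw [← rjb, ← mul_assoc, rgj, zero_mul]
lemma rdb : qδ k * qβ k = 0 := by rw [← rjb, ← mul_assoc, rdj, zero_mul]
lemma rddd : qδ k * (qδ k * qδ k) = 0 := by
  rw [← rab, ← mul_assoc, rda, zero_mul]

section AssocVariants
variable {k}
lemma rii' (x : QuiverAlg k) : qi k * (qi k * x) = qi k * x := by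
  rw [← mul_assoc, rii]
lemma rij' (x : QuiverAlg k) : qi k * (qj k * x) = 0 := by
  rw [← mul_assoc, rij, zero_mul]
lemma rji' (x : QuiverAlg k) : qj k * (qi k * x) = 0 := by
  rw [← mul_assoc, rji, zero_mul]
lemma rjj' (x : QuiverAlg k) : qj k * (qj k * x) = qj k * x := by
  rw [← mul_assoc, rjj]
lemma ria' (x : QuiverAlg k) : qi k * (qα k * x) = qα k * x := by
  rw [← mul_assoc, ria]
lemma raj' (x : QuiverAlg k) : qα k * (qj k * x) = qα k * x := by
  rw [← mul_assoc, raj]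
lemma rjb' (x : QuiverAlg k) : qj k * (qβ k * x) = qβ k * x := by
  rw [← mul_assoc, rjb]
lemma rbi' (x : QuiverAlg k) : qβ k * (qi k * x) = qβ k * x := by
  rw [← mul_assoc, rbi]
lemma rig' (x : QuiverAlg k) : qi k * (qγ k * x) = qγ k * x := by
  rw [← mul_assoc, rig]
lemma rgi' (x : QuiverAlg k) : qγ k * (qi k * x) = qγ k * x := by
  rw [← mul_assoc, rgi]
lemma rid' (x : QuiverAlg k) : qi k * (qδ k * x) = qδ k * x := by
  rw [← mul_assoc, rid]
lemma rdi' (x : QuiverAlg k) : qδ k * (qi k * x) = qδ k * x := by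
  rw [← mul_assoc, rdi]
lemma rdg' (x : QuiverAlg k) : qδ k * (qγ k * x) = 0 := by
  rw [← mul_assoc, rdg, zero_mul]
lemma rgd' (x : QuiverAlg k) : qγ k * (qδ k * x) = 0 := by
  rw [← mul_assoc, rgd, zero_mul]
lemma rda' (x : QuiverAlg k) : qδ k * (qα k * x) = 0 := by
  rw [← mul_assoc, rda, zero_mul]
lemma rga' (x : QuiverAlg k) : qγ k * (qα k * x) = 0 := by
  rw [← mul_assoc, rga, zero_mul]
lemma rbd' (x : QuiverAlg k) : qβ k * (qδ k * x) = 0 := by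
  rw [← mul_assoc, rbd, zero_mul]
lemma rbg' (x : QuiverAlg k) : qβ k * (qγ k * x) = 0 := by
  rw [← mul_assoc, rbg, zero_mul]
lemma rai' (x : QuiverAlg k) : qα k * (qi k * x) = 0 := by
  rw [← mul_assoc, rai, zero_mul]
lemma rja' (x : QuiverAlg k) : qj k * (qα k * x) = 0 := by
  rw [← mul_assoc, rja, zero_mul]
lemma rbj' (x : QuiverAlg k) : qβ k * (qj k * x) = 0 := by
  rw [← mul_assoc, rbj, zero_mul]
lemma rib' (x : QuiverAlg k) : qi k * (qβ k * x) = 0 := by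
  rw [← mul_assoc, rib, zero_mul]
lemma rgj' (x : QuiverAlg k) : qγ k * (qj k * x) = 0 := by
  rw [← mul_assoc, rgj, zero_mul]
lemma rjg' (x : QuiverAlg k) : qj k * (qγ k * x) = 0 := by
  rw [← mul_assoc, rjg, zero_mul]
lemma rdj' (x : QuiverAlg k) : qδ k * (qj k * x) = 0 := by
  rw [← mul_assoc, rdj, zero_mul]
lemma rjd' (x : QuiverAlg k) : qj k * (qδ k * x) = 0 := by
  rw [← mul_assoc, rjd, zero_mul]
lemma raa' (x : QuiverAlg k) : qα k * (qα k * x) = 0 := by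
  rw [← mul_assoc, raa, zero_mul]
lemma rag' (x : QuiverAlg k) : qα k * (qγ k * x) = 0 := by
  rw [← mul_assoc, rag, zero_mul]
lemma rad' (x : QuiverAlg k) : qα k * (qδ k * x) = 0 := by
  rw [← mul_assoc, rad, zero_mul]
lemma rbb' (x : QuiverAlg k) : qβ k * (qβ k * x) = 0 := by
  rw [← mul_assoc, rbb, zero_mul]
lemma rgb' (x : QuiverAlg k) : qγ k * (qβ k * x) = 0 := by
  rw [← mul_assoc, rgb, zero_mul]
lemma rdb' (x : QuiverAlg k) : qδ k * (qβ k * x) = 0 := by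
  rw [← mul_assoc, rdb, zero_mul]
lemma rab' (x : QuiverAlg k) : qα k * (qβ k * x) = qδ k * (qδ k * x) := by
  rw [← mul_assoc, rab, mul_assoc]
lemma rggg' (x : QuiverAlg k) : qγ k * (qγ k * (qγ k * x)) = qδ k * (qδ k * x) := by
  have h : (qγ k * (qγ k * qγ k)) * x = (qδ k * qδ k) * x := by rw [rggg]
  rw [mul_assoc, mul_assoc] at h
  rw [h, ← mul_assoc, mul_assoc]
lemma rddd' (x : QuiverAlg k) : qδ k * (qδ k * (qδ k * x)) = 0 := by
  have h : (qδ k * (qδ k * qδ k)) * x = 0 := by rw [rddd, zero_mul]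
  rw [mul_assoc, mul_assoc] at h
  exact h

end AssocVariants

lemma bq0 : qbasisVec k 0 = qi k := rfl
lemma bq1 : qbasisVec k 1 = qj k := rfl
lemma bq2 : qbasisVec k 2 = qα k := rfl
lemma bq3 : qbasisVec k 3 = qβ k := rfl
lemma bq4 : qbasisVec k 4 = qβ k * qα k := rfl
lemma bq5 : qbasisVec k 5 = qγ k := rfl
lemma bq6 : qbasisVec k 6 = qγ k ^ 2 := rfl
lemma bq7 : qbasisVec k 7 = qδ k := rfl
lemma bq8 : qbasisVec k 8 = qδ k ^ 2 := rfl

-- the span of the basis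
noncomputable abbrev qSpan : Submodule k (QuiverAlg k) :=
  Submodule.span k (Set.range (qbasisVec k))

lemma mem_bv (m : Fin 9) : qbasisVec k m ∈ qSpan k := Submodule.subset_span ⟨m, rfl⟩
lemma mem_qi : qi k ∈ qSpan k := by simpa [qbasisVec] using mem_bv k 0
lemma mem_qj : qj k ∈ qSpan k := by simpa [qbasisVec] using mem_bv k 1
lemma mem_qa : qα k ∈ qSpan k := by simpa [qbasisVec] using mem_bv k 2
lemma mem_qb : qβ k ∈ qSpan k := by simpa [qbasisVec] using mem_bv k 3
lemma mem_ba : qβ k * qα k ∈ qSpan k := by simpa [qbasisVec] using mem_bv k 4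
lemma mem_qg : qγ k ∈ qSpan k := by simpa [qbasisVec] using mem_bv k 5
lemma mem_gg : qγ k * qγ k ∈ qSpan k := by simpa [qbasisVec, pow_two] using mem_bv k 6
lemma mem_qd : qδ k ∈ qSpan k := by simpa [qbasisVec] using mem_bv k 7
lemma mem_dd : qδ k * qδ k ∈ qSpan k := by simpa [qbasisVec, pow_two] using mem_bv k 8

lemma bmm : ∀ m n : Fin 9, qbasisVec k m * qbasisVec k n ∈ qSpan k := by
  intro m n
  fin_cases m <;> fin_cases n <;>
    simp [bq0, bq1, bq2, bq3, bq4, bq5, bq6, bq7, bq8, pow_two, mul_assoc,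
      rii, rjj, rij, rji, ria, raj, rjb, rbi, rig, rgi, rid, rdi, rab, rggg, rdg,
      rgd, rda, rga, rbd, rbg, rai, rja, rbj, rib, rgj, rjg, rdj, rjd, raa, rag, rad, rbb,
      rgb, rdb, rddd, rii', rjj', rij', rji', ria', raj', rjb', rbi', rig', rgi', rid', rdi',
      rdg', rgd', rda', rga', rbd', rbg', rai', rja', rbj', rib', rgj', rjg', rdj', rjd',
      raa', rag', rad', rbb', rgb', rdb', rab', rggg', rddd', mul_zero, zero_mul] <;>
    first
      | exact Submodule.zero_mem _
      | exact mem_qi k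
      | exact mem_qj k
      | exact mem_qa k
      | exact mem_qb k
      | exact mem_ba k
      | exact mem_qg k
      | exact mem_gg k
      | exact mem_qd k
      | exact mem_dd k

lemma mul_mem_span {x y : QuiverAlg k} (hx : x ∈ qSpan k) (hy : y ∈ qSpan k) :
    x * y ∈ qSpan k := by
  have h := Submodule.mul_mem_mul hx hy
  rw [Submodule.span_mul_span] at h
  refine Submodule.span_le.mpr ?_ h
  rintro t ⟨u, hu, v, hv, rfl⟩
  obtain ⟨m, rfl⟩ := hu
  obtain ⟨n, rfl⟩ := hv
  exact bmm k m n

lemma one_mem_span : (1 : QuiverAlg k) ∈ qSpan k := by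
  rw [← rone]; exact add_mem (mem_qi k) (mem_qj k)

lemma mem_span_all (z : QuiverAlg k) : z ∈ qSpan k := by
  obtain ⟨y, rfl⟩ := RingQuot.mkAlgHom_surjective k (QuiverRel k) z
  refine FreeAlgebra.induction k (Fin 6)
    (motive := fun y => RingQuot.mkAlgHom k (QuiverRel k) y ∈ qSpan k) ?_ ?_ ?_ ?_ y
  · intro r
    rw [AlgHom.commutes, Algebra.algebraMap_eq_smul_one]
    exact Submodule.smul_mem _ _ (one_mem_span k)
  · intro x
    fin_cases x
    · exact mem_qi k
    · exact mem_qj k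
    · exact mem_qa k
    · exact mem_qb k
    · exact mem_qg k
    · exact mem_qd k
  · intro a b ha hb
    rw [_root_.map_mul]
    exact mul_mem_span k ha hb
  · intro a b ha hb
    rw [_root_.map_add]
    exact add_mem ha hb

lemma entries_combo (c : Fin 9 → k) (p q : Fin 9) :
    Φq k (∑ m, c m • qbasisVec k m) p q = ∑ m, c m * ((MsB m p q : ℤ) : k) := by
  rw [map_sum]
  simp only [_root_.map_smul, Φq_basis, Matrix.sum_apply, Matrix.smul_apply, centry,
    smul_eq_mul]

lemma central_entry_eq (z : QuiverAlg k) (hzc : z ∈ QCenter k) (c : Fin 9 → k)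
    (hc : ∑ m, c m • qbasisVec k m = z) (g : QuiverAlg k) (G : M9) (hg : Φq k g = castM k G)
    (p q : Fin 9) :
    ∑ t, ((G p t : ℤ) : k) * (∑ m, c m * ((MsB m t q : ℤ) : k))
      = ∑ t, (∑ m, c m * ((MsB m p t : ℤ) : k)) * ((G t q : ℤ) : k) := by
  have h : Φq k (g * z) = Φq k (z * g) := by
    rw [Subalgebra.mem_center_iff.mp hzc g]
  rw [_root_.map_mul, _root_.map_mul, ← hc] at h
  have e := congrFun (congrFun h p) q
  rw [Matrix.mul_apply, Matrix.mul_apply] at e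
  simp only [hg, entries_combo, centry] at e
  exact e

lemma central_combo (z : QuiverAlg k) (hzc : z ∈ QCenter k) :
    ∃ c : Fin 9 → k, (∑ m, c m • qbasisVec k m = z) ∧ c 1 = c 0 ∧ c 2 = 0 ∧ c 3 = 0 := by
  obtain ⟨c, hc⟩ := (Submodule.mem_span_range_iff_exists_fun k).mp (mem_span_all k z)
  refine ⟨c, hc, ?_, ?_, ?_⟩
  · have e := central_entry_eq k z hzc c hc (qα k) MxA (Φq_a k) 2 1
    simp [Fin.sum_univ_succ, MsB, MxI, MxJ, MxA, MxB, MxBA, MxG, MxG2, MxD, MxD2,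
      Matrix.single, Matrix.diagonal] at e
    exact e
  · have e := central_entry_eq k z hzc c hc (qβ k) MxB (Φq_b k) 8 0
    simp [Fin.sum_univ_succ, MsB, MxI, MxJ, MxA, MxB, MxBA, MxG, MxG2, MxD, MxD2,
      Matrix.single, Matrix.diagonal] at e
    exact e.symm
  · have e := central_entry_eq k z hzc c hc (qα k) MxA (Φq_a k) 4 1
    simp [Fin.sum_univ_succ, MsB, MxI, MxJ, MxA, MxB, MxBA, MxG, MxG2, MxD, MxD2,
      Matrix.single, Matrix.diagonal] at e
    exact e.symm

/-- The general form of a central element. -/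
noncomputable def Ef (a b g gg d dd : k) : QuiverAlg k :=
  a • 1 + (b • (qβ k * qα k) + (g • qγ k + (gg • (qγ k * qγ k) +
    (d • qδ k + dd • (qδ k * qδ k)))))

lemma fsc_3_2 : Fin.succ (2 : Fin 3) = (3 : Fin 4) := rfl
lemma fsc_4_2 : Fin.succ (2 : Fin 4) = (3 : Fin 5) := rfl
lemma fsc_4_3 : Fin.succ (3 : Fin 4) = (4 : Fin 5) := rfl
lemma fsc_5_2 : Fin.succ (2 : Fin 5) = (3 : Fin 6) := rfl
lemma fsc_5_3 : Fin.succ (3 : Fin 5) = (4 : Fin 6) := rfl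
lemma fsc_5_4 : Fin.succ (4 : Fin 5) = (5 : Fin 6) := rfl
lemma fsc_6_2 : Fin.succ (2 : Fin 6) = (3 : Fin 7) := rfl
lemma fsc_6_3 : Fin.succ (3 : Fin 6) = (4 : Fin 7) := rfl
lemma fsc_6_4 : Fin.succ (4 : Fin 6) = (5 : Fin 7) := rfl
lemma fsc_6_5 : Fin.succ (5 : Fin 6) = (6 : Fin 7) := rfl
lemma fsc_7_2 : Fin.succ (2 : Fin 7) = (3 : Fin 8) := rfl
lemma fsc_7_3 : Fin.succ (3 : Fin 7) = (4 : Fin 8) := rfl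
lemma fsc_7_4 : Fin.succ (4 : Fin 7) = (5 : Fin 8) := rfl
lemma fsc_7_5 : Fin.succ (5 : Fin 7) = (6 : Fin 8) := rfl
lemma fsc_7_6 : Fin.succ (6 : Fin 7) = (7 : Fin 8) := rfl
lemma fsc_8_2 : Fin.succ (2 : Fin 8) = (3 : Fin 9) := rfl
lemma fsc_8_3 : Fin.succ (3 : Fin 8) = (4 : Fin 9) := rfl
lemma fsc_8_4 : Fin.succ (4 : Fin 8) = (5 : Fin 9) := rfl
lemma fsc_8_5 : Fin.succ (5 : Fin 8) = (6 : Fin 9) := rfl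
lemma fsc_8_6 : Fin.succ (6 : Fin 8) = (7 : Fin 9) := rfl
lemma fsc_8_7 : Fin.succ (7 : Fin 8) = (8 : Fin 9) := rfl

lemma sum9exp (c : Fin 9 → k) : ∑ m, c m • qbasisVec k m
    = c 0 • qi k + (c 1 • qj k + (c 2 • qα k + (c 3 • qβ k + (c 4 • (qβ k * qα k) +
      (c 5 • qγ k + (c 6 • (qγ k * qγ k) + (c 7 • qδ k + c 8 • (qδ k * qδ k)))))))) := by
  simp only [Fin.sum_univ_succ, Fin.sum_univ_zero, add_zero]
  norm_num [fsc_3_2, fsc_4_2, fsc_4_3, fsc_5_2, fsc_5_3, fsc_5_4, fsc_6_2, fsc_6_3, fsc_6_4, fsc_6_5, fsc_7_2, fsc_7_3, fsc_7_4, fsc_7_5, fsc_7_6, fsc_8_2, fsc_8_3, fsc_8_4, fsc_8_5, fsc_8_6, fsc_8_7, bq0, bq1, bq2, bq3, bq4, bq5, bq6, bq7, bq8, pow_two]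

lemma central_combo6 (z : QuiverAlg k) (hzc : z ∈ QCenter k) :
    ∃ a b g gg d dd : k, z = Ef k a b g gg d dd := by
  obtain ⟨c, hc, h1, h2, h3⟩ := central_combo k z hzc
  refine ⟨c 0, c 4, c 5, c 6, c 7, c 8, ?_⟩
  rw [← hc, sum9exp, h1, h2, h3, Ef, ← rone]
  simp only [zero_smul, zero_add, add_zero, smul_add]
  module

lemma Emul (a b g gg d dd a' b' g' gg' d' dd' : k) :
    Ef k a b g gg d dd * Ef k a' b' g' gg' d' dd'
      = Ef k (a*a') (a*b'+b*a') (a*g'+g*a') (a*gg'+gg*a'+g*g') (a*d'+d*a')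
             (a*dd'+dd*a'+g*gg'+gg*g'+d*d') := by
  simp only [Ef, add_mul, mul_add, smul_mul_smul_comm, one_mul, mul_one, mul_assoc,
    rii, rjj, rij, rji, ria, raj, rjb, rbi, rig, rgi, rid, rdi, rab, rggg, rdg,
    rgd, rda, rga, rbd, rbg, rai, rja, rbj, rib, rgj, rjg, rdj, rjd, raa, rag, rad, rbb,
    rgb, rdb, rddd, rii', rjj', rij', rji', ria', raj', rjb', rbi', rig', rgi', rid', rdi',
    rdg', rgd', rda', rga', rbd', rbg', rai', rja', rbj', rib', rgj', rjg', rdj', rjd',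
    raa', rag', rad', rbb', rgb', rdb', rab', rggg', rddd', mul_zero, zero_mul,
    smul_zero, add_zero, zero_add]
  module

open MvPolynomial in
noncomputable abbrev Iq : Ideal (MvPolynomial (Fin 2) k) :=
  Ideal.span {(X 0 : MvPolynomial (Fin 2) k) ^ 3 - X 1 ^ 2, X 0 * X 1, X 1 ^ 3}

lemma Φq_ba : Φq k (qβ k * qα k) = castM k MxBA := by
  rw [_root_.map_mul, Φq_b, Φq_a]; exact castM_mul_eq k z22
lemma Φq_gg : Φq k (qγ k * qγ k) = castM k MxG2 := by
  rw [_root_.map_mul, Φq_g]; exact castM_mul_eq k z23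
lemma Φq_dd : Φq k (qδ k * qδ k) = castM k MxD2 := by
  rw [_root_.map_mul, Φq_d]; exact castM_mul_eq k z24

open MvPolynomial in
noncomputable def readP (m : Matrix (Fin 9) (Fin 9) k) : MvPolynomial (Fin 2) k :=
  C (m 0 0) + C (m 5 0) * X 0 + C (m 6 0) * X 0 ^ 2 + C (m 7 0) * X 1
    + C (m 8 0 + m 4 1) * X 1 ^ 2

open MvPolynomial in
lemma readP_E (a b g gg d dd : k) :
    readP k (Φq k (Ef k a b g gg d dd))
      = C a + C g * X 0 + C gg * X 0 ^ 2 + C d * X 1 + C (dd + b) * X 1 ^ 2 := by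
  have h1 : Φq k (Ef k a b g gg d dd)
      = a • 1 + (b • castM k MxBA + (g • castM k MxG + (gg • castM k MxG2 +
        (d • castM k MxD + dd • castM k MxD2)))) := by
    simp only [Ef, _root_.map_add, _root_.map_smul, _root_.map_one, Φq_ba, Φq_g, Φq_gg,
      Φq_d, Φq_dd]
  rw [h1]
  simp [readP, Matrix.add_apply, Matrix.smul_apply, Matrix.one_apply, centry,
    smul_eq_mul, _root_.map_add, MxBA, MxG, MxG2, MxD, MxD2, Matrix.single]

open MvPolynomial in
noncomputable def φf (z : ↥(QCenter k)) : MvPolynomial (Fin 2) k ⧸ Iq k :=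
  Ideal.Quotient.mk (Iq k) (readP k (Φq k z.val))

lemma φf_one : φf k 1 = 1 := by
  have h1 : ((1 : ↥(QCenter k)) : QuiverAlg k) = Ef k 1 0 0 0 0 0 := by
    simp [Ef]
  rw [φf, h1, readP_E]
  simp
lemma φf_zero : φf k 0 = 0 := by
  have h0 : ((0 : ↥(QCenter k)) : QuiverAlg k) = Ef k 0 0 0 0 0 0 := by
    simp [Ef]
  rw [φf, h0, readP_E]
  simp
lemma φf_add (z w : ↥(QCenter k)) : φf k (z + w) = φf k z + φf k w := by
  have hc : ((z + w : ↥(QCenter k)) : QuiverAlg k) = z.val + w.val := rfl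
  rw [φf, φf, φf, hc, _root_.map_add]
  rw [show readP k (Φq k z.val + Φq k w.val) = readP k (Φq k z.val) + readP k (Φq k w.val) from
    by simp only [readP, Matrix.add_apply, _root_.map_add]; ring]
  exact (Ideal.Quotient.mk (Iq k)).map_add _ _
open MvPolynomial in
lemma φf_mul (z w : ↥(QCenter k)) : φf k (z * w) = φf k z * φf k w := by
    obtain ⟨a, b, g, gg, d, dd, hz⟩ := central_combo6 k z.val z.2
    obtain ⟨a', b', g', gg', d', dd', hw⟩ := central_combo6 k w.val w.2
    have hc : ((z * w : ↥(QCenter k)) : QuiverAlg k) = z.val * w.val := rfl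
    rw [φf, φf, φf, hc, hz, hw, Emul, readP_E, readP_E, readP_E,
      ← (Ideal.Quotient.mk (Iq k)).map_mul]
    rw [Ideal.Quotient.eq]
    have key : (C a + C g * X 0 + C gg * X 0 ^ 2 + C d * X 1 + C (dd + b) * X 1 ^ 2) *
          (C a' + C g' * X 0 + C gg' * X 0 ^ 2 + C d' * X 1 + C (dd' + b') * X 1 ^ 2)
        - (C (a * a') + C (a * g' + g * a') * X 0 + C (a * gg' + gg * a' + g * g') * X 0 ^ 2
            + C (a * d' + d * a') * X 1
            + C ((a * dd' + dd * a' + g * gg' + gg * g' + d * d') + (a * b' + b * a')) * X 1 ^ 2)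
        = (C (g * gg' + gg * g') + C (gg * gg') * X 0) * ((X 0 : MvPolynomial (Fin 2) k) ^ 3 - X 1 ^ 2)
          + (C (g * d' + d * g') + C (gg * gg') * X 1 + C (g * (dd' + b') + (dd + b) * g') * X 1
              + C (gg * d' + d * gg') * X 0 + C (gg * (dd' + b') + (dd + b) * gg') * (X 0 * X 1))
              * (X 0 * X 1)
          + (C (d * (dd' + b') + (dd + b) * d') + C ((dd + b) * (dd' + b')) * X 1) * (X 1 ^ 3) := by
      simp only [C_add, C_mul]
      ring
    have h2 : (C a + C g * X 0 + C gg * X 0 ^ 2 + C d * X 1 + C (dd + b) * X 1 ^ 2) *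
          (C a' + C g' * X 0 + C gg' * X 0 ^ 2 + C d' * X 1 + C (dd' + b') * X 1 ^ 2)
        - (C (a * a') + C (a * g' + g * a') * X 0 + C (a * gg' + gg * a' + g * g') * X 0 ^ 2
            + C (a * d' + d * a') * X 1
            + C ((a * dd' + dd * a' + g * gg' + gg * g' + d * d') + (a * b' + b * a')) * X 1 ^ 2)
          ∈ Iq k := by
      rw [key]
      refine add_mem (add_mem ?_ ?_) ?_
      · exact Ideal.mul_mem_left _ _ (Ideal.subset_span (Set.mem_insert _ _))
      · exact Ideal.mul_mem_left _ _ (Ideal.subset_span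
          (Set.mem_insert_of_mem _ (Set.mem_insert _ _)))
      · exact Ideal.mul_mem_left _ _ (Ideal.subset_span
          (Set.mem_insert_of_mem _ (Set.mem_insert_of_mem _ rfl)))
    have h3 := neg_mem h2
    rw [neg_sub] at h3
    exact h3

lemma φf_commutes (r : k) :
    φf k (algebraMap k ↥(QCenter k) r) = algebraMap k (MvPolynomial (Fin 2) k ⧸ Iq k) r := by
  have h1 : ((algebraMap k ↥(QCenter k) r : ↥(QCenter k)) : QuiverAlg k)
      = Ef k r 0 0 0 0 0 := by
    simp [Ef, Algebra.algebraMap_eq_smul_one]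
  rw [φf, h1, readP_E]
  rw [IsScalarTower.algebraMap_apply k (MvPolynomial (Fin 2) k) (MvPolynomial (Fin 2) k ⧸ Iq k),
    Ideal.Quotient.algebraMap_eq, MvPolynomial.algebraMap_eq]
  simp

noncomputable def φZ : ↥(QCenter k) →ₐ[k] (MvPolynomial (Fin 2) k ⧸ Iq k) where
  toFun := φf k
  map_one' := φf_one k
  map_zero' := φf_zero k
  map_add' := φf_add k
  map_mul' := φf_mul k
  commutes' := φf_commutes k

set_option maxHeartbeats 1600000 in
open MvPolynomial in
lemma poly_coeffs (a b c d e : k)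
    (h : (C a + C b * X 0 + C c * X 0 ^ 2 + C d * X 1 + C e * X 1 ^ 2 :
        MvPolynomial (Fin 2) k) ∈ Iq k) :
    a = 0 ∧ b = 0 ∧ c = 0 ∧ d = 0 ∧ e = 0 := by
  rw [Ideal.mem_span_insert] at h
  obtain ⟨A, z1, hz1, hP⟩ := h
  rw [Ideal.mem_span_insert] at hz1
  obtain ⟨B, z2, hz2, hz1e⟩ := hz1
  rw [Ideal.mem_span_singleton'] at hz2
  obtain ⟨CC, hCC⟩ := hz2
  subst hz1e
  rw [← hCC] at hP
  have key := fun m : Fin 2 →₀ ℕ => congrArg (coeff m) hP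
  have k0 := key 0
  have k1 := key (Finsupp.single 0 1)
  have k2 := key (Finsupp.single 0 2)
  have k3 := key (Finsupp.single 1 1)
  have k4 := key (Finsupp.single 1 2)
  have k5 := key (Finsupp.single 0 3)
  simp only [coeff_add, coeff_C, coeff_C_mul, coeff_X', coeff_X_pow, mul_sub, coeff_sub,
    X_pow_eq_monomial, coeff_mul_monomial', ← mul_assoc, coeff_mul_X',
    Finsupp.single_le_iff, Finsupp.single_apply, Finsupp.mem_support_iff,
    Finsupp.single_eq_single_iff, Finsupp.single_eq_zero, tsub_self, eq_comm,
    ← Finsupp.single_tsub] at k0 k1 k2 k3 k4 k5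
  norm_num at k0 k1 k2 k3 k4 k5
  exact ⟨k0, k1, k2, k3, by rw [k4, ← k5, neg_zero]⟩

open MvPolynomial in
lemma φZ_gamma (hγ : qγ k ∈ QCenter k) :
    φZ k ⟨qγ k, hγ⟩ = Ideal.Quotient.mk (Iq k) (X 0) := by
  have hq : qγ k = Ef k 0 0 1 0 0 0 := by simp [Ef]
  show Ideal.Quotient.mk (Iq k) (readP k (Φq k (qγ k))) = _
  rw [hq, readP_E]
  exact congrArg _ (by simp)

open MvPolynomial in
lemma φZ_delta (hδ : qδ k ∈ QCenter k) :
    φZ k ⟨qδ k, hδ⟩ = Ideal.Quotient.mk (Iq k) (X 1) := by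
  have hq : qδ k = Ef k 0 0 0 0 1 0 := by simp [Ef]
  show Ideal.Quotient.mk (Iq k) (readP k (Φq k (qδ k))) = _
  rw [hq, readP_E]
  exact congrArg _ (by simp)

end Stmt11Aux

open MvPolynomial in
/-- In characteristic `3`, the quotient `Z(A)/Z^pr(A)` of the centre of `A` by the ideal
spanned by `αβ − βα` is isomorphic as a `k`-algebra to `k[x,y]/(x³ − y², xy, y³)`, via
the map sending `x` to the image of `γ` and `y` to the image of `δ`. (We phrase this
as: there is a surjective `k`-algebra homomorphism `Z(A) → k[x,y]/(x³ − y², xy, y³)`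
with kernel the ideal generated by `αβ − βα`, sending `γ` to the class of `x` and `δ`
to the class of `y`; by the first isomorphism theorem this is exactly the asserted
isomorphism together with the description of the map.) -/
theorem stmt_11 [CharP k 3]
    (hγ : qγ k ∈ QCenter k) (hδ : qδ k ∈ QCenter k)
    (hz : qα k * qβ k - qβ k * qα k ∈ QCenter k) :
    ∃ φ : ↥(QCenter k) →ₐ[k] (MvPolynomial (Fin 2) k ⧸
        (Ideal.span {(X 0 : MvPolynomial (Fin 2) k) ^ 3 - X 1 ^ 2, X 0 * X 1, X 1 ^ 3} :
          Ideal (MvPolynomial (Fin 2) k))),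
      Function.Surjective φ ∧
      RingHom.ker φ = Ideal.span ({⟨qα k * qβ k - qβ k * qα k, hz⟩} : Set ↥(QCenter k)) ∧
      φ ⟨qγ k, hγ⟩ = Ideal.Quotient.mk _ (X 0) ∧
      φ ⟨qδ k, hδ⟩ = Ideal.Quotient.mk _ (X 1) := by
  refine ⟨φZ k, ?_, ?_, φZ_gamma k hγ, φZ_delta k hδ⟩
  · -- surjectivity
    have hrange : ∀ p : MvPolynomial (Fin 2) k,
        Ideal.Quotient.mk (Iq k) p ∈ (φZ k).range := by
      intro p
      induction p using MvPolynomial.induction_on with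
      | C r =>
        refine ⟨algebraMap k _ r, ?_⟩
        show φZ k (algebraMap k _ r) = _
        rw [AlgHom.commutes,
          IsScalarTower.algebraMap_apply k (MvPolynomial (Fin 2) k)
            (MvPolynomial (Fin 2) k ⧸ Iq k),
          Ideal.Quotient.algebraMap_eq, MvPolynomial.algebraMap_eq]
      | add p q hp hq' =>
        rw [(Ideal.Quotient.mk (Iq k)).map_add]
        exact add_mem hp hq'
      | mul_X p i hp =>
        rw [(Ideal.Quotient.mk (Iq k)).map_mul]
        refine mul_mem hp ?_
        fin_cases i
        · exact ⟨⟨qγ k, hγ⟩, φZ_gamma k hγ⟩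
        · exact ⟨⟨qδ k, hδ⟩, φZ_delta k hδ⟩
    intro r
    obtain ⟨p, rfl⟩ := Ideal.Quotient.mk_surjective r
    exact hrange p
  · -- kernel
    ext z
    constructor
    · intro hzk
      rw [RingHom.mem_ker] at hzk
      obtain ⟨a, b, g, gg, d, dd, hzv⟩ := central_combo6 k z.val z.2
      have h0 : φZ k z = Ideal.Quotient.mk (Iq k)
          (C a + C g * X 0 + C gg * X 0 ^ 2 + C d * X 1 + C (dd + b) * X 1 ^ 2) := by
        show Ideal.Quotient.mk (Iq k) (readP k (Φq k z.val)) = _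
        rw [hzv, readP_E]
      rw [h0, Ideal.Quotient.eq_zero_iff_mem] at hzk
      obtain ⟨ha, hg, hgg, hd, hdb⟩ := poly_coeffs k a g gg d (dd + b) hzk
      refine Ideal.mem_span_singleton'.mpr ⟨(-b) • 1, ?_⟩
      apply Subtype.ext
      show (-b) • (1 : QuiverAlg k) * (qα k * qβ k - qβ k * qα k) = z.val
      rw [hzv, ha, hg, hgg, hd, show dd = -b from by linear_combination hdb, Ef, rab]
      simp only [zero_smul, zero_add, add_zero, smul_mul_assoc, one_mul, smul_sub, neg_smul]
      module
    · intro hzm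
      rw [RingHom.mem_ker]
      have ht : φZ k ⟨qα k * qβ k - qβ k * qα k, hz⟩ = 0 := by
        have hq : qα k * qβ k - qβ k * qα k = Ef k 0 (-1) 0 0 0 1 := by
          rw [rab, Ef]
          simp only [zero_smul, zero_add, add_zero, one_smul, neg_smul, one_smul]
          module
        show Ideal.Quotient.mk (Iq k) (readP k (Φq k (qα k * qβ k - qβ k * qα k))) = 0
        rw [hq, readP_E]
        simp
      obtain ⟨w, hw⟩ := Ideal.mem_span_singleton'.mp hzm
      rw [← hw, _root_.map_mul, ht, mul_zero]
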